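/- For every integer k ≥ 1 with k ≡ 1 (mod 10), the graph G consisting of the disjoint union of (k−1)/5 copies of the 5-cycle C_5 and 3(k−1)/10 copies of the path P_4 on four vertices has exactly 11(k−1)/5 vertices, has maximum degree at most 2, and has no induced subgraph that is regular and has k or more vertices. (Hence the bound f(k,2) ≤ 11(k−1)/5 is tight.) -/

import Mathlib

/-- The degree of a vertex: the number of its neighbors (graph on a finite type). -/
noncomputable def ndeg {V : Type*} (G : SimpleGraph V) (v : V) : ℕ :=
  (G.neighborSet v).ncard

/-- A graph is regular if all its vertices have the same degree. -/
def IsRegularGraph {V : Type*} (G : SimpleGraph V) : Prop :=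
  ∃ r : ℕ, ∀ v, ndeg G v = r

/-- Disjoint copies of the graph `H`, indexed by `I`. -/
def copies (I : Type*) {α : Type*} (H : SimpleGraph α) : SimpleGraph (I × α) where
  Adj a b := a.1 = b.1 ∧ H.Adj a.2 b.2
  symm := ⟨fun a b h => ⟨h.1.symm, h.2.symm⟩⟩
  loopless := ⟨fun a h => H.loopless.irrefl a.2 h.2⟩

open SimpleGraph Finset

instance pathDec : DecidableRel (SimpleGraph.pathGraph 4).Adj := fun _ _ =>
  decidable_of_iff _ SimpleGraph.pathGraph_adj.symm

lemma loc5 (r : ℕ) (hr : r ≤ 2) (t : Finset (Fin 5))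
    (h : ∀ a ∈ t, (t.filter (fun b => (SimpleGraph.cycleGraph 5).Adj a b)).card = r) :
    t.card ≤ if r = 2 then 5 else 2 := by
  interval_cases r <;> revert h <;> revert t <;> decide

lemma loc4 (r : ℕ) (hr : r ≤ 2) (t : Finset (Fin 4))
    (h : ∀ a ∈ t, (t.filter (fun b => (SimpleGraph.pathGraph 4).Adj a b)).card = r) :
    t.card ≤ if r = 2 then 0 else 2 := by
  interval_cases r <;> revert h <;> revert t <;> decide

lemma ndeg_induce {V : Type*} (G : SimpleGraph V) (s : Set V) (v : s) :
    ndeg (G.induce s) v = (s ∩ G.neighborSet (v : V)).ncard := by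
  unfold ndeg
  rw [← Set.ncard_image_of_injective _ Subtype.val_injective]
  congr 1
  ext w
  simp only [Set.mem_image, mem_neighborSet, Set.mem_inter_iff, comap_adj,
    Function.Embedding.coe_subtype]
  constructor
  · rintro ⟨u, hu, rfl⟩
    exact ⟨u.2, hu⟩
  · rintro ⟨hw, ha⟩
    exact ⟨⟨w, hw⟩, ha, rfl⟩

variable {m n : ℕ}

abbrev BigG (m n : ℕ) : SimpleGraph ((Fin m × Fin 5) ⊕ (Fin n × Fin 4)) :=
  (copies (Fin m) (SimpleGraph.cycleGraph 5)) ⊕g (copies (Fin n) (SimpleGraph.pathGraph 4))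

lemma nbhd_left (i : Fin m) (a : Fin 5) :
    (BigG m n).neighborSet (Sum.inl (i, a)) =
      (fun b => (Sum.inl (i, b) : (Fin m × Fin 5) ⊕ (Fin n × Fin 4))) ''
        ((SimpleGraph.cycleGraph 5).neighborSet a) := by
  ext w
  cases w with
  | inl p =>
    obtain ⟨i', b⟩ := p
    simp only [mem_neighborSet, BigG, SimpleGraph.sum_adj, copies, Set.mem_image,
      Sum.inl.injEq, Prod.mk.injEq]
    constructor
    · rintro ⟨rfl, h⟩; exact ⟨b, h, rfl, rfl⟩
    · rintro ⟨x, hx, rfl, rfl⟩; exact ⟨rfl, hx⟩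
  | inr p =>
    simp [BigG, SimpleGraph.sum_adj]

lemma nbhd_right (j : Fin n) (a : Fin 4) :
    (BigG m n).neighborSet (Sum.inr (j, a)) =
      (fun b => (Sum.inr (j, b) : (Fin m × Fin 5) ⊕ (Fin n × Fin 4))) ''
        ((SimpleGraph.pathGraph 4).neighborSet a) := by
  ext w
  cases w with
  | inr p =>
    obtain ⟨j', b⟩ := p
    simp only [mem_neighborSet, BigG, SimpleGraph.sum_adj, copies, Set.mem_image,
      Sum.inr.injEq, Prod.mk.injEq]
    constructor
    · rintro ⟨rfl, h⟩; exact ⟨b, h, rfl, rfl⟩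
    · rintro ⟨x, hx, rfl, rfl⟩; exact ⟨rfl, hx⟩
  | inl p =>
    simp [BigG, SimpleGraph.sum_adj]

lemma inl_inj (i : Fin m) : Function.Injective
    (fun b => (Sum.inl (i, b) : (Fin m × Fin 5) ⊕ (Fin n × Fin 4))) := by
  intro x y h; simpa using h

lemma inr_inj (j : Fin n) : Function.Injective
    (fun b => (Sum.inr (j, b) : (Fin m × Fin 5) ⊕ (Fin n × Fin 4))) := by
  intro x y h; simpa using h

lemma nbhd_ncard {α : Type*} [Fintype α] [DecidableEq α] (H : SimpleGraph α)
    [DecidableRel H.Adj] (a : α) :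
    (H.neighborSet a).ncard = (Finset.univ.filter (H.Adj a)).card := by
  rw [← Set.ncard_coe_finset]
  congr 1
  ext b
  simp

lemma ndeg_big_le (v : (Fin m × Fin 5) ⊕ (Fin n × Fin 4)) : ndeg (BigG m n) v ≤ 2 := by
  unfold ndeg
  cases v with
  | inl p =>
    obtain ⟨i, a⟩ := p
    rw [nbhd_left, Set.ncard_image_of_injective _ (inl_inj i), nbhd_ncard]
    revert a; decide
  | inr p =>
    obtain ⟨j, a⟩ := p
    rw [nbhd_right, Set.ncard_image_of_injective _ (inr_inj j), nbhd_ncard]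
    revert a; decide

lemma key3 (m n k : ℕ) (hk : 1 ≤ k) (h1 : 2 * m + 2 * n < k) (h2 : 5 * m < k) :
    ¬ ∃ s : Set ((Fin m × Fin 5) ⊕ (Fin n × Fin 4)),
        k ≤ s.ncard ∧ IsRegularGraph ((BigG m n).induce s) := by
  classical
  rintro ⟨s, hks, r, hreg⟩
  have hsfin : s.Finite := Set.toFinite s
  have hsne : s.Nonempty := by
    rw [← Set.ncard_pos hsfin]; omega
  obtain ⟨v₀, hv₀⟩ := hsne
  have hr2 : r ≤ 2 := by
    have h := hreg ⟨v₀, hv₀⟩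
    rw [ndeg_induce] at h
    have hh : (s ∩ (BigG m n).neighborSet v₀).ncard = r := h
    have h' : (s ∩ (BigG m n).neighborSet v₀).ncard ≤ ((BigG m n).neighborSet v₀).ncard :=
      Set.ncard_le_ncard Set.inter_subset_right (Set.toFinite _)
    have := ndeg_big_le (m := m) (n := n) v₀
    unfold ndeg at this
    omega
  set T : Fin m → Finset (Fin 5) := fun i => univ.filter (fun b => Sum.inl (i, b) ∈ s) with hT
  set U : Fin n → Finset (Fin 4) := fun j => univ.filter (fun b => Sum.inr (j, b) ∈ s) with hU
  have hdegT : ∀ i, ∀ a ∈ T i,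
      ((T i).filter (fun b => (SimpleGraph.cycleGraph 5).Adj a b)).card = r := by
    intro i a ha
    have has : Sum.inl (i, a) ∈ s := by simp [hT] at ha; exact ha
    have h := hreg ⟨Sum.inl (i, a), has⟩
    rw [ndeg_induce] at h
    rw [← h]
    have himg : s ∩ (BigG m n).neighborSet (Sum.inl (i, a)) =
        (fun b => (Sum.inl (i, b) : (Fin m × Fin 5) ⊕ (Fin n × Fin 4))) ''
          ↑((T i).filter (fun b => (SimpleGraph.cycleGraph 5).Adj a b)) := by
      rw [nbhd_left]
      ext w
      simp only [Set.mem_inter_iff, Set.mem_image, Finset.coe_filter, Set.mem_setOf_eq,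
        hT, Finset.mem_filter, Finset.mem_univ, true_and]
      constructor
      · rintro ⟨hw, x, hx, rfl⟩
        exact ⟨x, ⟨hw, hx⟩, rfl⟩
      · rintro ⟨x, ⟨hxs, hxa⟩, rfl⟩
        exact ⟨hxs, x, hxa, rfl⟩
    rw [himg, Set.ncard_image_of_injective _ (inl_inj i), Set.ncard_coe_finset]
  have hdegU : ∀ j, ∀ a ∈ U j,
      ((U j).filter (fun b => (SimpleGraph.pathGraph 4).Adj a b)).card = r := by
    intro j a ha
    have has : Sum.inr (j, a) ∈ s := by simp [hU] at ha; exact ha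
    have h := hreg ⟨Sum.inr (j, a), has⟩
    rw [ndeg_induce] at h
    rw [← h]
    have himg : s ∩ (BigG m n).neighborSet (Sum.inr (j, a)) =
        (fun b => (Sum.inr (j, b) : (Fin m × Fin 5) ⊕ (Fin n × Fin 4))) ''
          ↑((U j).filter (fun b => (SimpleGraph.pathGraph 4).Adj a b)) := by
      rw [nbhd_right]
      ext w
      simp only [Set.mem_inter_iff, Set.mem_image, Finset.coe_filter, Set.mem_setOf_eq,
        hU, Finset.mem_filter, Finset.mem_univ, true_and]
      constructor
      · rintro ⟨hw, x, hx, rfl⟩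
        exact ⟨x, ⟨hw, hx⟩, rfl⟩
      · rintro ⟨x, ⟨hxs, hxa⟩, rfl⟩
        exact ⟨hxs, x, hxa, rfl⟩
    rw [himg, Set.ncard_image_of_injective _ (inr_inj j), Set.ncard_coe_finset]
  have hTcard : ∀ i, (T i).card ≤ if r = 2 then 5 else 2 := fun i => loc5 r hr2 (T i) (hdegT i)
  have hUcard : ∀ j, (U j).card ≤ if r = 2 then 0 else 2 := fun j => loc4 r hr2 (U j) (hdegU j)
  -- counting
  have hsum : s.ncard = (∑ i : Fin m, (T i).card) + ∑ j : Fin n, (U j).card := by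
    rw [Set.ncard_eq_toFinset_card']
    rw [Finset.card_eq_sum_card_fiberwise
      (f := fun v => Sum.map Prod.fst Prod.fst v) (t := Finset.univ) (fun x _ => mem_univ _)]
    rw [Fintype.sum_sum_type]
    congr 1
    · apply Finset.sum_congr rfl
      intro i _
      have : s.toFinset.filter (fun v => Sum.map Prod.fst Prod.fst v = Sum.inl i) =
          (T i).image (fun b => Sum.inl (i, b)) := by
        ext w
        cases w with
        | inl p =>
          obtain ⟨i', b⟩ := p
          simp only [Finset.mem_filter, Set.mem_toFinset, Sum.map_inl, Sum.inl.injEq,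
            Finset.mem_image, hT, Finset.mem_univ, true_and, Prod.mk.injEq]
          constructor
          · rintro ⟨hw, rfl⟩; exact ⟨b, hw, rfl, rfl⟩
          · rintro ⟨x, hx, rfl, rfl⟩; exact ⟨hx, rfl⟩
        | inr p =>
          simp
      rw [this, Finset.card_image_of_injective _ (inl_inj i)]
    · apply Finset.sum_congr rfl
      intro j _
      have : s.toFinset.filter (fun v => Sum.map Prod.fst Prod.fst v = Sum.inr j) =
          (U j).image (fun b => Sum.inr (j, b)) := by
        ext w
        cases w with
        | inr p =>
          obtain ⟨j', b⟩ := p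
          simp only [Finset.mem_filter, Set.mem_toFinset, Sum.map_inr, Sum.inr.injEq,
            Finset.mem_image, hU, Finset.mem_univ, true_and, Prod.mk.injEq]
          constructor
          · rintro ⟨hw, rfl⟩; exact ⟨b, hw, rfl, rfl⟩
          · rintro ⟨x, hx, rfl, rfl⟩; exact ⟨hx, rfl⟩
        | inl p =>
          simp
      rw [this, Finset.card_image_of_injective _ (inr_inj j)]
  have hbound : s.ncard ≤ m * (if r = 2 then 5 else 2) + n * (if r = 2 then 0 else 2) := by
    rw [hsum]
    have b1 : (∑ i : Fin m, (T i).card) ≤ m * (if r = 2 then 5 else 2) := by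
      calc (∑ i : Fin m, (T i).card) ≤ Finset.univ.card • (if r = 2 then 5 else 2) :=
            Finset.sum_le_card_nsmul _ _ _ (fun i _ => hTcard i)
        _ = m * (if r = 2 then 5 else 2) := by simp [mul_comm]
    have b2 : (∑ j : Fin n, (U j).card) ≤ n * (if r = 2 then 0 else 2) := by
      calc (∑ j : Fin n, (U j).card) ≤ Finset.univ.card • (if r = 2 then 0 else 2) :=
            Finset.sum_le_card_nsmul _ _ _ (fun j _ => hUcard j)
        _ = n * (if r = 2 then 0 else 2) := by simp [mul_comm]
    omega
  by_cases hr : r = 2 <;> simp [hr] at hbound <;> omega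

/-- For `k ≡ 1 (mod 10)`, the disjoint union of `(k-1)/5` copies of `C₅` and `3(k-1)/10`
copies of `P₄` has exactly `11(k-1)/5` vertices, maximum degree at most `2`, and no regular
induced subgraph with `k` or more vertices; hence the bound `f(k,2) ≤ 11(k-1)/5` is tight. -/
theorem stmt_12 (k : ℕ) (hk : 1 ≤ k) (hk10 : k % 10 = 1) :
    let G := (copies (Fin ((k - 1) / 5)) (SimpleGraph.cycleGraph 5)) ⊕g
             (copies (Fin (3 * (k - 1) / 10)) (SimpleGraph.pathGraph 4))
    5 * Nat.card ((Fin ((k - 1) / 5) × Fin 5) ⊕ (Fin (3 * (k - 1) / 10) × Fin 4))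
        = 11 * (k - 1) ∧
    (∀ v, ndeg G v ≤ 2) ∧
    ¬ ∃ s : Set ((Fin ((k - 1) / 5) × Fin 5) ⊕ (Fin (3 * (k - 1) / 10) × Fin 4)),
        k ≤ s.ncard ∧ IsRegularGraph (G.induce s) := by
  intro G
  refine ⟨?_, fun v => ndeg_big_le v, key3 _ _ k hk (by omega) (by omega)⟩
  simp only [Nat.card_eq_fintype_card, Fintype.card_sum, Fintype.card_prod, Fintype.card_fin]
  omega
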